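/- There is a constant c > 0 depending only on n such that the following holds. Let q be an odd prime power, n ≥ 1, and let U, V ⊆ M_n(𝔽_q) × M_n(𝔽_q). Let e(U, V) denote the number of pairs ((A, C), (B, D)) ∈ U × V with A·B = C + D. Then | e(U, V) − |U||V|/q^{n²} | ≤ c · q^{n² − 1/2} · √(|U||V|). -/

import Mathlib

open Finset
open scoped Matrix

set_option linter.unusedSectionVars false

namespace SPDM

variable {n : ℕ} {F : Type} [Field F] [Fintype F] [DecidableEq F]

local notation "Mat" => Matrix (Fin n) (Fin n) F

lemma cardMat : Fintype.card (Matrix (Fin n) (Fin n) F) = Fintype.card F ^ (n*n) := by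
  have : Fintype.card (Matrix (Fin n) (Fin n) F) = Fintype.card (Fin n → Fin n → F) :=
    Fintype.card_congr (Equiv.refl _)
  simp [this]; ring

lemma edge_card (B D : Mat) :
    (univ.filter fun u : Mat × Mat => u.1 * B = u.2 + D).card = Fintype.card F ^ (n*n) := by
  have himg : (univ.filter fun u : Mat × Mat => u.1 * B = u.2 + D) =
      univ.image (fun A : Mat => (A, A * B - D)) := by
    ext u
    simp only [mem_filter, mem_univ, true_and, mem_image]
    constructor
    · intro h
      exact ⟨u.1, Prod.ext rfl (by simp only; rw [h]; abel)⟩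
    · rintro ⟨A, rfl⟩
      simp
  rw [himg, Finset.card_image_of_injective _ (fun A A' h => (Prod.ext_iff.1 h).1),
    card_univ, cardMat]

lemma cod_card (B D B' D' : Mat) :
    (univ.filter fun u : Mat × Mat => u.1 * B = u.2 + D ∧ u.1 * B' = u.2 + D').card =
    (univ.filter fun A : Mat => A * (B - B') = D - D').card := by
  have himg : (univ.filter fun u : Mat × Mat => u.1 * B = u.2 + D ∧ u.1 * B' = u.2 + D') =
      (univ.filter fun A : Mat => A * (B - B') = D - D').image
        (fun A : Mat => (A, A * B - D)) := by
    ext u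
    simp only [mem_filter, mem_univ, true_and, mem_image]
    constructor
    · rintro ⟨h1, h2⟩
      refine ⟨u.1, ?_, Prod.ext rfl (by simp only; rw [h1]; abel)⟩
      rw [mul_sub, h1, h2]; abel
    · rintro ⟨A, hA, rfl⟩
      rw [mul_sub] at hA
      refine ⟨by simp, ?_⟩
      simp only
      rw [show A * B' = A * B - (A * B - A * B') by abel, hA]
      abel
  rw [himg, Finset.card_image_of_injective _ (fun A A' h => (Prod.ext_iff.1 h).1)]

lemma solve_unit {M : Mat} (h : IsUnit M) (K : Mat) :
    (univ.filter fun A : Mat => A * M = K).card = 1 := by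
  rcases h with ⟨u, rfl⟩
  have : (univ.filter fun A : Mat => A * (u : Mat) = K) = {K * (↑u⁻¹ : Mat)} := by
    ext A
    simp only [mem_filter, mem_univ, true_and, mem_singleton]
    exact (Units.eq_mul_inv_iff_mul_eq u).symm
  rw [this, card_singleton]

lemma solve_sum (M : Mat) :
    ∑ K : Mat, (univ.filter fun A : Mat => A * M = K).card = Fintype.card F ^ (n*n) := by
  rw [← cardMat (n := n) (F := F), ← card_univ]
  exact (Finset.card_eq_sum_card_fiberwise
    (f := fun A : Mat => A * M) (s := univ) (t := univ) (fun A _ => mem_univ _)).symm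

lemma hyperplane {x : Fin n → F} (hx : x ≠ 0) :
    (univ.filter fun M : Matrix (Fin n) (Fin n) F => M.mulVec x = 0).card ≤
      Fintype.card F ^ (n*(n-1)) := by
  obtain ⟨j₀, hj₀⟩ : ∃ j, x j ≠ 0 := by
    by_contra h
    push_neg at h
    exact hx (funext h)
  have hH : Fintype.card {r : Fin n → F // r ⬝ᵥ x = 0} ≤ Fintype.card F ^ (n-1) := by
    have hinj : Function.Injective
        (fun r : {r : Fin n → F // r ⬝ᵥ x = 0} => (fun j : {j : Fin n // j ≠ j₀} => r.1 j)) := by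
      rintro ⟨r, hr⟩ ⟨r', hr'⟩ h
      simp only at h
      have hoff : ∀ j : Fin n, j ≠ j₀ → r j = r' j := fun j hj => congrFun h ⟨j, hj⟩
      have hsplit : ∀ s : Fin n → F, s ⬝ᵥ x = 0 →
          s j₀ * x j₀ = - ∑ j ∈ univ.erase j₀, s j * x j := by
        intro s hs
        have h0 := Finset.add_sum_erase univ (fun j => s j * x j) (mem_univ j₀)
        simp only [dotProduct] at hs
        rw [← h0] at hs
        have hs' : s j₀ * x j₀ + ∑ j ∈ univ.erase j₀, s j * x j = 0 := hs
        linear_combination hs'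
      have h1 := hsplit r hr
      have h2 := hsplit r' hr'
      have hsame : ∑ j ∈ univ.erase j₀, r j * x j = ∑ j ∈ univ.erase j₀, r' j * x j :=
        Finset.sum_congr rfl fun j hj => by rw [hoff j (Finset.ne_of_mem_erase hj)]
      have hkey : r j₀ = r' j₀ := by
        have := h1.trans (by rw [hsame, ← h2])
        exact mul_right_cancel₀ hj₀ this
      apply Subtype.ext
      funext j
      show r j = r' j
      by_cases hj : j = j₀
      · rw [hj, hkey]
      · exact hoff j hj
    calc Fintype.card {r : Fin n → F // r ⬝ᵥ x = 0}
        ≤ Fintype.card ({j : Fin n // j ≠ j₀} → F) := Fintype.card_le_of_injective _ hinj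
      _ = Fintype.card F ^ (n - 1) := by
          rw [Fintype.card_fun]
          congr 1
          rw [Fintype.card_subtype_compl]
          simp
  have hcard : (univ.filter fun M : Matrix (Fin n) (Fin n) F => M.mulVec x = 0).card =
      Fintype.card {M : Matrix (Fin n) (Fin n) F // M.mulVec x = 0} :=
    (Fintype.card_subtype _).symm
  rw [hcard]
  have hequiv : {M : Matrix (Fin n) (Fin n) F // M.mulVec x = 0} ≃
      (Fin n → {r : Fin n → F // r ⬝ᵥ x = 0}) := by
    refine (Equiv.subtypeEquiv (Equiv.refl _) ?_).trans
      (Equiv.subtypePiEquivPi (p := fun _ r => r ⬝ᵥ x = 0))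
    intro M
    constructor
    · intro h i
      exact congrFun h i
    · intro h
      funext i
      exact h i
  rw [Fintype.card_congr hequiv, Fintype.card_fun]
  calc (Fintype.card {r : Fin n → F // r ⬝ᵥ x = 0}) ^ (Fintype.card (Fin n))
      ≤ (Fintype.card F ^ (n-1)) ^ n := by
        rw [Fintype.card_fin]
        exact Nat.pow_le_pow_left hH n
    _ = Fintype.card F ^ (n*(n-1)) := by rw [← pow_mul, Nat.mul_comm]

lemma singular_bound :
    (univ.filter fun M : Matrix (Fin n) (Fin n) F => ¬ IsUnit M).card * (Fintype.card F - 1) ≤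
      Fintype.card F ^ (n*n) := by
  classical
  set q := Fintype.card F with hq
  have key1 : ∀ M : Matrix (Fin n) (Fin n) F, ¬ IsUnit M →
      q - 1 ≤ (univ.filter fun x : Fin n → F => x ≠ 0 ∧ M.mulVec x = 0).card := by
    intro M hM
    have hdet : M.det = 0 := by
      by_contra h
      exact hM ((Matrix.isUnit_iff_isUnit_det M).2 (isUnit_iff_ne_zero.2 h))
    obtain ⟨v, hv, hMv⟩ := (Matrix.exists_mulVec_eq_zero_iff).2 hdet
    have hle := Finset.card_le_card_of_injOn (f := fun c : F => c • v)
      (s := univ.filter fun c : F => c ≠ 0)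
      (t := univ.filter fun x : Fin n → F => x ≠ 0 ∧ M.mulVec x = 0)
      (fun c hc => by
        simp only [Finset.mem_coe, mem_filter, mem_univ, true_and] at hc ⊢
        exact ⟨smul_ne_zero hc hv, by rw [Matrix.mulVec_smul, hMv, smul_zero]⟩)
      (fun c _ c' _ h => by
        simp only at h
        by_contra hne
        apply hv
        have h2 : (c - c') • v = 0 := by rw [sub_smul, h, sub_self]
        exact (smul_eq_zero.1 h2).resolve_left (sub_ne_zero.2 hne))
    calc q - 1 = (univ.filter fun c : F => c ≠ 0).card := by
          rw [Finset.filter_ne', Finset.card_erase_of_mem (mem_univ 0), card_univ]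
      _ ≤ _ := hle
  calc (univ.filter fun M : Matrix (Fin n) (Fin n) F => ¬ IsUnit M).card * (q - 1)
      = ∑ _M ∈ univ.filter fun M : Matrix (Fin n) (Fin n) F => ¬ IsUnit M, (q-1) := by
        rw [Finset.sum_const, smul_eq_mul]
    _ ≤ ∑ M ∈ univ.filter fun M : Matrix (Fin n) (Fin n) F => ¬ IsUnit M,
          (univ.filter fun x : Fin n → F => x ≠ 0 ∧ M.mulVec x = 0).card := by
        apply Finset.sum_le_sum
        intro M hM
        exact key1 M (Finset.mem_filter.1 hM).2
    _ ≤ ∑ M : Matrix (Fin n) (Fin n) F,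
          (univ.filter fun x : Fin n → F => x ≠ 0 ∧ M.mulVec x = 0).card :=
        Finset.sum_le_sum_of_subset (Finset.filter_subset _ _)
    _ = ∑ x : Fin n → F, (univ.filter fun M : Matrix (Fin n) (Fin n) F =>
          x ≠ 0 ∧ M.mulVec x = 0).card := by
        simp only [Finset.card_filter]
        rw [Finset.sum_comm]
    _ ≤ ∑ _x : Fin n → F, q ^ (n*(n-1)) := by
        apply Finset.sum_le_sum
        intro x _
        by_cases hx : x = 0
        · simp [hx]
        · calc (univ.filter fun M : Matrix (Fin n) (Fin n) F => x ≠ 0 ∧ M.mulVec x = 0).card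
              ≤ (univ.filter fun M : Matrix (Fin n) (Fin n) F => M.mulVec x = 0).card := by
                apply Finset.card_le_card
                intro M hM
                simp only [mem_filter, mem_univ, true_and] at hM ⊢
                exact hM.2
            _ ≤ q ^ (n*(n-1)) := hyperplane hx
    _ = q ^ n * q ^ (n*(n-1)) := by
        rw [Finset.sum_const, smul_eq_mul, card_univ, Fintype.card_fun, Fintype.card_fin]
    _ = q ^ (n*n) := by
        rw [← pow_add]
        congr 1
        cases n with
        | zero => simp
        | succ m => simp [Nat.succ_sub_one]; ring



noncomputable def find (u v : Mat × Mat) : ℝ := if u.1 * v.1 = u.2 + v.2 then 1 else 0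

noncomputable def cod (v v' : Mat × Mat) : ℝ :=
  ((univ.filter fun A : Mat => A * (v.1 - v'.1) = v.2 - v'.2).card : ℝ)

lemma find_sum (v : Mat × Mat) : ∑ u : Mat × Mat, find u v = (Fintype.card F : ℝ) ^ (n*n) := by
  unfold find
  rw [Finset.sum_boole, edge_card]
  push_cast
  rfl

lemma find_mul (v v' : Mat × Mat) : ∑ u : Mat × Mat, find u v * find u v' = cod v v' := by
  have h : ∀ u : Mat × Mat, find u v * find u v' =
      if (u.1 * v.1 = u.2 + v.2 ∧ u.1 * v'.1 = u.2 + v'.2) then (1:ℝ) else 0 := by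
    intro u
    unfold find
    by_cases h1 : u.1 * v.1 = u.2 + v.2 <;> by_cases h2 : u.1 * v'.1 = u.2 + v'.2 <;>
      simp [h1, h2]
  rw [Finset.sum_congr rfl fun u _ => h u, Finset.sum_boole]
  unfold cod
  exact_mod_cast congrArg (Nat.cast : ℕ → ℝ) (cod_card v.1 v.2 v'.1 v'.2)

lemma cod_nonneg (v v' : Mat × Mat) : 0 ≤ cod v v' := by unfold cod; positivity

lemma cod_sum (v : Mat × Mat) (B' : Mat) :
    ∑ D' : Mat, cod v (B', D') = (Fintype.card F : ℝ) ^ (n*n) := by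
  unfold cod
  rw [Fintype.sum_equiv (Equiv.subLeft v.2)
    (fun D' => ((univ.filter fun A : Mat => A * (v.1 - B') = v.2 - D').card : ℝ))
    (fun K => ((univ.filter fun A : Mat => A * (v.1 - B') = K).card : ℝ))
    (fun D' => rfl)]
  rw [← Nat.cast_sum, solve_sum]
  push_cast
  rfl

lemma singular_real (hn : 1 ≤ n) :
    ((univ.filter fun M : Matrix (Fin n) (Fin n) F => ¬ IsUnit M).card : ℝ) ≤
      2 * (Fintype.card F : ℝ) ^ (n*n-1) := by
  have hq2 : 2 ≤ Fintype.card F := Fintype.one_lt_card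
  have hN1 : 1 ≤ n*n := by nlinarith
  have hb := singular_bound (n := n) (F := F)
  have hcast : ((univ.filter fun M : Matrix (Fin n) (Fin n) F => ¬ IsUnit M).card : ℝ) *
      ((Fintype.card F : ℝ) - 1) ≤ (Fintype.card F : ℝ)^(n*n) := by
    have h := Nat.cast_le (α := ℝ) |>.2 hb
    push_cast [Nat.cast_sub (by omega : 1 ≤ Fintype.card F)] at h
    exact h
  set S := ((univ.filter fun M : Matrix (Fin n) (Fin n) F => ¬ IsUnit M).card : ℝ) with hS
  have hS0 : 0 ≤ S := by positivity
  have hQ2 : (2:ℝ) ≤ (Fintype.card F : ℝ) := by exact_mod_cast hq2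
  have hP0 : (0:ℝ) ≤ (Fintype.card F : ℝ)^(n*n-1) := by positivity
  have hpow : (Fintype.card F : ℝ)^(n*n) = (Fintype.card F : ℝ)^(n*n-1) * (Fintype.card F : ℝ) := by
    rw [← pow_succ]
    congr 1
    omega
  rw [hpow] at hcast
  nlinarith [mul_nonneg hP0 (sub_nonneg.2 hQ2)]

lemma master (hn : 1 ≤ n) (U' V' : Finset (Mat × Mat)) :
    |((((U' ×ˢ V').filter fun p : (Mat × Mat) × (Mat × Mat) =>
          p.1.1 * p.2.1 = p.1.2 + p.2.2).card : ℝ) -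
        (U'.card : ℝ) * (V'.card : ℝ) / (Fintype.card F : ℝ) ^ (n*n))| ≤
      2 * Real.sqrt ((Fintype.card F : ℝ) ^ (2*(n*n)-1)) *
        Real.sqrt ((U'.card : ℝ) * (V'.card : ℝ)) := by
  classical
  have hq2 : 2 ≤ Fintype.card F := Fintype.one_lt_card
  have hN1 : 1 ≤ n*n := by nlinarith
  have hQ2 : (2:ℝ) ≤ (Fintype.card F:ℝ) := by exact_mod_cast hq2
  have hQ0 : (0:ℝ) < (Fintype.card F:ℝ) := by linarith
  have hQ1 : (1:ℝ) ≤ (Fintype.card F:ℝ) := by linarith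
  have hQN0 : (Fintype.card F:ℝ)^(n*n) ≠ 0 := by positivity
  set c0 : ℝ := ((Fintype.card F:ℝ)^(n*n))⁻¹ with hc0
  set g : (Mat × Mat) → ℝ := fun u => ∑ v ∈ V', (find u v - c0) with hg
  -- counting identities
  have h1 : ((((U' ×ˢ V').filter fun p : (Mat × Mat) × (Mat × Mat) =>
      p.1.1 * p.2.1 = p.1.2 + p.2.2).card : ℝ)) = ∑ u ∈ U', ∑ v ∈ V', find u v := by
    rw [Finset.card_filter]
    push_cast
    rw [Finset.sum_product]
    rfl
  have h2 : (U'.card : ℝ) * (V'.card : ℝ) / (Fintype.card F:ℝ)^(n*n) = ∑ u ∈ U', ∑ v ∈ V', c0 := by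
    simp only [Finset.sum_const, nsmul_eq_mul, hc0]
    rw [div_eq_mul_inv]
    ring
  have hErr : ((((U' ×ˢ V').filter fun p : (Mat × Mat) × (Mat × Mat) =>
      p.1.1 * p.2.1 = p.1.2 + p.2.2).card : ℝ)) -
      (U'.card : ℝ) * (V'.card : ℝ) / (Fintype.card F:ℝ)^(n*n) = ∑ u ∈ U', g u := by
    rw [h1, h2, ← Finset.sum_sub_distrib]
    exact Finset.sum_congr rfl fun u _ => (Finset.sum_sub_distrib _ _).symm
  -- Cauchy-Schwarz
  have hindsum : ∀ h : (Mat × Mat) → ℝ,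
      ∑ u : Mat × Mat, (if u ∈ U' then (1:ℝ) else 0) * h u = ∑ u ∈ U', h u := by
    intro h
    rw [Finset.sum_congr rfl (fun u (_ : u ∈ univ) => by
      rw [ite_mul, one_mul, zero_mul]), Finset.sum_ite_mem, Finset.univ_inter]
  have hind2 : ∑ u : Mat × Mat, (if u ∈ U' then (1:ℝ) else 0)^2 = (U'.card : ℝ) := by
    rw [Finset.sum_congr rfl (fun u (_ : u ∈ univ) => by rw [sq, ite_mul, one_mul, zero_mul]),
      Finset.sum_ite_mem, Finset.univ_inter]
    simp
  have hCS : (∑ u ∈ U', g u)^2 ≤ (U'.card:ℝ) * ∑ u : Mat × Mat, (g u)^2 := by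
    have h := Finset.sum_mul_sq_le_sq_mul_sq univ (fun u => if u ∈ U' then (1:ℝ) else 0) g
    calc (∑ u ∈ U', g u)^2
        = (∑ u : Mat × Mat, (if u ∈ U' then (1:ℝ) else 0) * g u)^2 := by rw [hindsum g]
      _ ≤ (∑ u : Mat × Mat, (if u ∈ U' then (1:ℝ) else 0)^2) * ∑ u : Mat × Mat, (g u)^2 := h
      _ = (U'.card:ℝ) * ∑ u : Mat × Mat, (g u)^2 := by rw [hind2]
  -- second moment identity
  have hinner : ∀ v v' : Mat × Mat,
      ∑ u : Mat × Mat, (find u v - c0) * (find u v' - c0) = cod v v' - 1 := by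
    intro v v'
    have expand : ∀ u : Mat × Mat, (find u v - c0) * (find u v' - c0) =
        find u v * find u v' - c0 * find u v - c0 * find u v' + c0 * c0 := fun u => by ring
    rw [Finset.sum_congr rfl fun u (_ : u ∈ univ) => expand u]
    rw [Finset.sum_add_distrib, Finset.sum_sub_distrib, Finset.sum_sub_distrib,
      ← Finset.mul_sum, ← Finset.mul_sum, find_sum, find_sum, find_mul,
      Finset.sum_const, Finset.card_univ, nsmul_eq_mul]
    have hcards : (Fintype.card (Matrix (Fin n) (Fin n) F × Matrix (Fin n) (Fin n) F) : ℝ) =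
        (Fintype.card F:ℝ)^(n*n) * (Fintype.card F:ℝ)^(n*n) := by
      rw [Fintype.card_prod, cardMat]
      push_cast
      ring
    rw [hcards]
    have hc : c0 * (Fintype.card F:ℝ)^(n*n) = 1 := inv_mul_cancel₀ hQN0
    calc cod v v' - c0 * (Fintype.card F:ℝ)^(n*n) - c0 * (Fintype.card F:ℝ)^(n*n) + (Fintype.card F:ℝ)^(n*n) * (Fintype.card F:ℝ)^(n*n) * (c0 * c0) =
        cod v v' - (c0 * (Fintype.card F:ℝ)^(n*n)) - (c0 * (Fintype.card F:ℝ)^(n*n)) + ((c0 * (Fintype.card F:ℝ)^(n*n)) * (c0 * (Fintype.card F:ℝ)^(n*n))) := by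
          ring
      _ = cod v v' - 1 := by rw [hc]; ring
  have hsecond : ∑ u : Mat × Mat, (g u)^2 = ∑ v ∈ V', ∑ v' ∈ V', (cod v v' - 1) := by
    have hexp : ∀ u, (g u)^2 = ∑ v ∈ V', ∑ v' ∈ V', (find u v - c0) * (find u v' - c0) := by
      intro u
      rw [hg]
      simp only
      rw [sq, Finset.sum_mul_sum]
    rw [Finset.sum_congr rfl fun u (_ : u ∈ univ) => hexp u, Finset.sum_comm]
    refine Finset.sum_congr rfl fun v _ => ?_
    rw [Finset.sum_comm]
    exact Finset.sum_congr rfl fun v' _ => hinner v v'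
  -- per-vertex bound
  have hstepC : ∀ v : Mat × Mat, ∑ v' ∈ V', (cod v v' - 1) ≤ 3 * (Fintype.card F:ℝ)^(2*(n*n)-1) := by
    intro v
    have hpt : ∀ v' ∈ V', cod v v' - 1 ≤ (if v' = v then (Fintype.card F:ℝ)^(n*n) else 0) +
        (if (v'.1 ≠ v.1 ∧ ¬ IsUnit (v.1 - v'.1)) then cod v v' else 0) := by
      intro v' _
      by_cases hv : v' = v
      · subst hv
        rw [if_pos rfl, if_neg (by simp)]
        have hcv : cod v' v' = (Fintype.card F:ℝ)^(n*n) := by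
          unfold cod
          have hfil : (univ.filter fun A : Mat => A * (v'.1 - v'.1) = v'.2 - v'.2) = univ := by
            apply Finset.filter_true_of_mem
            intro A _
            rw [sub_self, sub_self, mul_zero]
          rw [hfil, Finset.card_univ, cardMat]
          push_cast
          rfl
        rw [hcv]
        linarith [pow_nonneg hQ0.le (n*n)]
      · by_cases hB : v'.1 = v.1
        · have hD : v'.2 ≠ v.2 := fun hD => hv (Prod.ext hB hD)
          have hcv : cod v v' = 0 := by
            unfold cod
            have hfil : (univ.filter fun A : Mat => A * (v.1 - v'.1) = v.2 - v'.2) = ∅ := by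
              apply Finset.filter_false_of_mem
              intro A _
              rw [hB, sub_self, mul_zero]
              exact fun h0 => (sub_ne_zero.2 (Ne.symm hD)) h0.symm
            rw [hfil]
            simp
          rw [if_neg hv, if_neg (by simp [hB])]
          rw [hcv]
          norm_num
        · by_cases hU : IsUnit (v.1 - v'.1)
          · have hcv : cod v v' = 1 := by
              unfold cod
              rw [solve_unit hU]
              norm_num
            rw [if_neg hv, if_neg (by simp [hU]), hcv]
            norm_num
          · rw [if_neg hv, if_pos ⟨hB, hU⟩]
            have := cod_nonneg v v'
            linarith
    have hsum2 : (∑ v' : Mat × Mat, (if (v'.1 ≠ v.1 ∧ ¬ IsUnit (v.1 - v'.1)) then cod v v' else 0))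
        ≤ 2 * (Fintype.card F:ℝ)^(n*n-1) * (Fintype.card F:ℝ)^(n*n) := by
      have hrw : (∑ v' : Mat × Mat, (if (v'.1 ≠ v.1 ∧ ¬ IsUnit (v.1 - v'.1)) then cod v v' else 0))
          = ∑ B' : Mat, (if (B' ≠ v.1 ∧ ¬ IsUnit (v.1 - B')) then (Fintype.card F:ℝ)^(n*n) else 0) := by
        rw [Fintype.sum_prod_type]
        refine Finset.sum_congr rfl fun B' _ => ?_
        by_cases hB : (B' ≠ v.1 ∧ ¬ IsUnit (v.1 - B'))
        · rw [if_pos hB]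
          have e1 : (∑ D' : Mat, (if ((B', D').1 ≠ v.1 ∧ ¬ IsUnit (v.1 - (B', D').1))
              then cod v (B', D') else 0)) = ∑ D' : Mat, cod v (B', D') :=
            Finset.sum_congr rfl fun D' _ => if_pos hB
          rw [e1]
          exact cod_sum v B'
        · rw [if_neg hB]
          exact Finset.sum_eq_zero fun D' _ => if_neg hB
      rw [hrw, ← Finset.sum_filter, Finset.sum_const, nsmul_eq_mul]
      have hcard_le : ((univ.filter fun B' : Mat => B' ≠ v.1 ∧ ¬ IsUnit (v.1 - B')).card : ℝ)
          ≤ 2 * (Fintype.card F:ℝ)^(n*n-1) := by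
        have hle : (univ.filter fun B' : Mat => B' ≠ v.1 ∧ ¬ IsUnit (v.1 - B')).card
            ≤ (univ.filter fun M : Mat => ¬ IsUnit M).card := by
          apply Finset.card_le_card_of_injOn (fun B' => v.1 - B')
          · intro B' hB'
            simp only [Finset.mem_coe, mem_filter, mem_univ, true_and] at hB' ⊢
            exact hB'.2
          · intro a _ b _ h
            exact sub_right_injective h
        have hle' : ((univ.filter fun B' : Mat => B' ≠ v.1 ∧ ¬ IsUnit (v.1 - B')).card : ℝ)
            ≤ ((univ.filter fun M : Mat => ¬ IsUnit M).card : ℝ) := by exact_mod_cast hle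
        exact hle'.trans (singular_real hn)
      exact mul_le_mul_of_nonneg_right hcard_le (by positivity)
    have hA : (∑ v' ∈ V', (cod v v' - 1)) ≤
        ∑ v' ∈ V', ((if v' = v then (Fintype.card F:ℝ)^(n*n) else 0) +
          (if (v'.1 ≠ v.1 ∧ ¬ IsUnit (v.1 - v'.1)) then cod v v' else 0)) :=
      Finset.sum_le_sum hpt
    have hB1 : (∑ v' ∈ V', ((if v' = v then (Fintype.card F:ℝ)^(n*n) else 0) +
          (if (v'.1 ≠ v.1 ∧ ¬ IsUnit (v.1 - v'.1)) then cod v v' else 0)))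
        = (∑ v' ∈ V', (if v' = v then (Fintype.card F:ℝ)^(n*n) else 0)) +
          ∑ v' ∈ V', (if (v'.1 ≠ v.1 ∧ ¬ IsUnit (v.1 - v'.1)) then cod v v' else 0) :=
      Finset.sum_add_distrib
    have hB2 : (∑ v' ∈ V', (if v' = v then (Fintype.card F:ℝ)^(n*n) else 0))
        ≤ (Fintype.card F:ℝ)^(n*n) := by
      rw [Finset.sum_ite_eq' V' v (fun _ => (Fintype.card F:ℝ)^(n*n))]
      split_ifs
      · exact le_refl _
      · positivity
    have hB3 : (∑ v' ∈ V', (if (v'.1 ≠ v.1 ∧ ¬ IsUnit (v.1 - v'.1)) then cod v v' else 0))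
        ≤ ∑ v' : Mat × Mat, (if (v'.1 ≠ v.1 ∧ ¬ IsUnit (v.1 - v'.1)) then cod v v' else 0) := by
      apply Finset.sum_le_sum_of_subset_of_nonneg (Finset.subset_univ V')
      intro v' _ _
      split_ifs
      · exact cod_nonneg _ _
      · exact le_refl _
    have e1 : (Fintype.card F:ℝ)^(n*n-1) * (Fintype.card F:ℝ)^(n*n)
        = (Fintype.card F:ℝ)^(2*(n*n)-1) := by
      rw [← pow_add]
      congr 1
      omega
    have e2 : (Fintype.card F:ℝ)^(n*n) ≤ (Fintype.card F:ℝ)^(2*(n*n)-1) :=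
      pow_le_pow_right₀ hQ1 (by omega)
    have e3 : 2 * (Fintype.card F:ℝ)^(n*n-1) * (Fintype.card F:ℝ)^(n*n)
        = 2 * (Fintype.card F:ℝ)^(2*(n*n)-1) := by
      rw [mul_assoc, e1]
    linarith [hA, hB1 ▸ hA, hB2, hB3, hsum2]
  -- assemble
  rw [hErr]
  have hkey : (∑ u ∈ U', g u)^2 ≤ 4 * ((Fintype.card F:ℝ)^(2*(n*n)-1)) * ((U'.card:ℝ) * (V'.card:ℝ)) := by
    have hV : ∑ v ∈ V', ∑ v' ∈ V', (cod v v' - 1) ≤ (V'.card:ℝ) * (3*(Fintype.card F:ℝ)^(2*(n*n)-1)) := by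
      calc (∑ v ∈ V', ∑ v' ∈ V', (cod v v' - 1)) ≤ ∑ _v ∈ V', 3*(Fintype.card F:ℝ)^(2*(n*n)-1) :=
            Finset.sum_le_sum (fun v _ => hstepC v)
        _ = (V'.card:ℝ) * (3*(Fintype.card F:ℝ)^(2*(n*n)-1)) := by rw [Finset.sum_const, nsmul_eq_mul]
    calc (∑ u ∈ U', g u)^2 ≤ (U'.card:ℝ) * ∑ u : Mat × Mat, (g u)^2 := hCS
      _ ≤ (U'.card:ℝ) * ((V'.card:ℝ) * (3*(Fintype.card F:ℝ)^(2*(n*n)-1))) := by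
          apply mul_le_mul_of_nonneg_left _ (Nat.cast_nonneg _)
          rw [hsecond]
          exact hV
      _ ≤ 4 * ((Fintype.card F:ℝ)^(2*(n*n)-1)) * ((U'.card:ℝ) * (V'.card:ℝ)) := by
          have h0 : (0:ℝ) ≤ (Fintype.card F:ℝ)^(2*(n*n)-1) * ((U'.card:ℝ) * (V'.card:ℝ)) := by positivity
          nlinarith [h0]
  have habs : |∑ u ∈ U', g u| = Real.sqrt ((∑ u ∈ U', g u)^2) := (Real.sqrt_sq_eq_abs _).symm
  rw [habs]
  calc Real.sqrt ((∑ u ∈ U', g u)^2)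
      ≤ Real.sqrt (4 * ((Fintype.card F:ℝ)^(2*(n*n)-1)) * ((U'.card:ℝ) * (V'.card:ℝ))) := Real.sqrt_le_sqrt hkey
    _ = 2 * Real.sqrt ((Fintype.card F:ℝ)^(2*(n*n)-1)) * Real.sqrt ((U'.card:ℝ) * (V'.card:ℝ)) := by
        rw [Real.sqrt_mul (by positivity), Real.sqrt_mul (by norm_num : (0:ℝ) ≤ 4),
          show Real.sqrt 4 = 2 by
            rw [show (4:ℝ) = 2^2 by norm_num, Real.sqrt_sq (by norm_num : (0:ℝ) ≤ 2)]]

end SPDM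

/-- Expander mixing lemma for the sum-product digraph over M_n(F_q). -/
theorem sum_product_digraph_mixing (n : ℕ) (hn : 1 ≤ n) :
    ∃ c : ℝ, 0 < c ∧
      ∀ (F : Type) [Field F] [Fintype F],
        Odd (Fintype.card F) →
        ∀ U V : Set (Matrix (Fin n) (Fin n) F × Matrix (Fin n) (Fin n) F),
          |({p : (Matrix (Fin n) (Fin n) F × Matrix (Fin n) (Fin n) F) ×
                (Matrix (Fin n) (Fin n) F × Matrix (Fin n) (Fin n) F) |
                p.1 ∈ U ∧ p.2 ∈ V ∧ p.1.1 * p.2.1 = p.1.2 + p.2.2}.ncard : ℝ) -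
              (U.ncard : ℝ) * (V.ncard : ℝ) / (Fintype.card F : ℝ) ^ ((n : ℝ) ^ 2)| ≤
            c * (Fintype.card F : ℝ) ^ ((n : ℝ) ^ 2 - 1 / 2) *
              Real.sqrt ((U.ncard : ℝ) * (V.ncard : ℝ)) := by
  classical
  refine ⟨2, by norm_num, ?_⟩
  intro F _ _ _hodd U V
  have hUf : U.Finite := Set.toFinite U
  have hVf : V.Finite := Set.toFinite V
  have hTf : Set.Finite {p : (Matrix (Fin n) (Fin n) F × Matrix (Fin n) (Fin n) F) ×
      (Matrix (Fin n) (Fin n) F × Matrix (Fin n) (Fin n) F) |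
      p.1 ∈ U ∧ p.2 ∈ V ∧ p.1.1 * p.2.1 = p.1.2 + p.2.2} := Set.toFinite _
  have hQ0 : (0:ℝ) < (Fintype.card F : ℝ) := by
    have := Fintype.card_pos (α := F)
    exact_mod_cast this
  have hrw1 : (Fintype.card F : ℝ) ^ ((n : ℝ)^2) = (Fintype.card F : ℝ) ^ (n*n) := by
    rw [show ((n:ℝ)^2) = ((n*n : ℕ) : ℝ) by push_cast; ring, Real.rpow_natCast]
  have hrw2 : (Fintype.card F : ℝ) ^ ((n : ℝ)^2 - 1/2)
      = Real.sqrt ((Fintype.card F : ℝ) ^ (2*(n*n)-1)) := by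
    rw [Real.sqrt_eq_rpow, ← Real.rpow_natCast ((Fintype.card F : ℝ)) (2*(n*n)-1),
      ← Real.rpow_mul hQ0.le]
    congr 1
    rw [Nat.cast_sub (by nlinarith : 1 ≤ 2*(n*n))]
    push_cast
    ring
  rw [Set.ncard_eq_toFinset_card _ hTf, Set.ncard_eq_toFinset_card _ hUf,
    Set.ncard_eq_toFinset_card _ hVf, hrw1, hrw2]
  have hTeq : hTf.toFinset = ((hUf.toFinset ×ˢ hVf.toFinset).filter
      fun p => p.1.1 * p.2.1 = p.1.2 + p.2.2) := by
    ext p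
    simp only [Set.Finite.mem_toFinset, Set.mem_setOf_eq, Finset.mem_filter, Finset.mem_product]
    tauto
  rw [hTeq]
  exact SPDM.master hn hUf.toFinset hVf.toFinset
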